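/- arXiv:math/0312355 — 3 statements merged into one kernel-verified Lean document; each statement's English description precedes it below -/
import Mathlib

section
/- For every ξ ∈ 𝔤 one has the operator identity ad_ξ ∘ H_ξ = ad_{∇p(ξ)} as linear maps 𝔤 → 𝔤, where H_ξ is the Hessian of p at ξ; i.e. [ξ, H_ξ(v)] = [∇p(ξ), v] for all v ∈ 𝔤. -/
open scoped RealInnerProductSpace

/-- Let `𝔤` be a finite-dimensional real Lie algebra (bracket `bk`) with an
ad-invariant inner product, and `p` a twice continuously differentiable infinitesimally
invariant function. Let `H` be the Hessian of `p` at `ξ`, the symmetric linear map with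
`⟪H v, w⟫ = (second derivative of p at ξ in directions v, w)`. Then
`ad_ξ ∘ H = ad_{∇p(ξ)}`, i.e. `[ξ, H v] = [∇p(ξ), v]` for all `v`. -/
theorem stmt3 {G : Type*} [NormedAddCommGroup G] [InnerProductSpace ℝ G]
    [FiniteDimensional ℝ G]
    (bk : G →ₗ[ℝ] G →ₗ[ℝ] G)
    (hanti : ∀ x y : G, bk x y = -bk y x)
    (hjacobi : ∀ x y z : G, bk x (bk y z) = bk (bk x y) z + bk y (bk x z))
    (hadinv : ∀ x y z : G, ⟪bk x y, z⟫ + ⟪y, bk x z⟫ = 0)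
    (p : G → ℝ) (hp : ContDiff ℝ 2 p)
    (hpinv : ∀ x y : G, ⟪gradient p x, bk y x⟫ = 0)
    (ξ : G) (H : G →ₗ[ℝ] G)
    (hH : ∀ v w : G, ⟪H v, w⟫ = iteratedFDeriv ℝ 2 p ξ ![v, w]) :
    ∀ v : G, bk ξ (H v) = bk (gradient p ξ) v := by
  intro v
  have hgrad : ∀ x c : G, ⟪gradient p x, c⟫ = fderiv ℝ p x c := by
    intro x c
    simp [gradient, InnerProductSpace.toDual_symm_apply]
  have hfd : ContDiff ℝ 1 (fderiv ℝ p) := hp.fderiv_right (by norm_num)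
  -- key derivative identity
  have key : ∀ y : G,
      fderiv ℝ (fderiv ℝ p) ξ v (bk y ξ) + fderiv ℝ p ξ (bk y v) = 0 := by
    intro y
    have hc : HasFDerivAt (fun x => fderiv ℝ p x) (fderiv ℝ (fderiv ℝ p) ξ) ξ :=
      (hfd.differentiable one_ne_zero ξ).hasFDerivAt
    have hu : HasFDerivAt (fun x => bk y x)
        (LinearMap.toContinuousLinearMap (bk y)) ξ :=
      (LinearMap.toContinuousLinearMap (bk y)).hasFDerivAt
    have h1 := hc.clm_apply hu
    have h0 : HasFDerivAt (fun x => fderiv ℝ p x (bk y x))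
        (0 : G →L[ℝ] ℝ) ξ := by
      have : (fun x => fderiv ℝ p x (bk y x)) = fun _ => (0 : ℝ) := by
        funext x
        rw [← hgrad x (bk y x), hpinv x y]
      rw [this]
      exact hasFDerivAt_const 0 ξ
    have heq := h1.unique h0
    have := congrArg (fun (L : G →L[ℝ] ℝ) => L v) heq
    simp only [ContinuousLinearMap.add_apply, ContinuousLinearMap.comp_apply,
      ContinuousLinearMap.flip_apply, ContinuousLinearMap.zero_apply,
      LinearMap.coe_toContinuousLinearMap'] at this
    linarith [this]
  have hH2 : ∀ w : G, ⟪H v, w⟫ = fderiv ℝ (fderiv ℝ p) ξ v w := by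
    intro w
    rw [hH v w, iteratedFDeriv_two_apply]
    simp
  apply ext_inner_right ℝ
  intro y
  -- ⟪bk ξ (H v), y⟫ = ⟪H v, bk y ξ⟫
  have e1 : ⟪bk ξ (H v), y⟫ = ⟪H v, bk y ξ⟫ := by
    have h := hadinv ξ (H v) y
    have hxy : ((bk y) ξ : G) = -((bk ξ) y) := by rw [hanti]
    rw [hxy]
    simp only [inner_neg_right]
    linarith [h]
  have e2 : ⟪H v, bk y ξ⟫ = -(fderiv ℝ p ξ (bk y v)) := by
    rw [hH2]
    linarith [key y]
  have e3 : ⟪bk (gradient p ξ) v, y⟫ = -(fderiv ℝ p ξ (bk y v)) := by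
    have h := hadinv v (gradient p ξ) y
    have hv : ((bk v) (gradient p ξ) : G) = -((bk (gradient p ξ)) v) := by rw [hanti]
    rw [hv] at h
    have hyv : ((bk y) v : G) = -((bk v) y) := by rw [hanti]
    rw [← hgrad ξ (bk y v), hyv]
    simp only [inner_neg_left, inner_neg_right] at h ⊢
    have := real_inner_comm (gradient p ξ) ((bk v) y)
    linarith [h]
  rw [e1, e2, e3]
end

section
/- Suppose ξ ∈ 𝔤 is such that the centralizer 𝔱 = ker(ad ξ) is abelian. Then 𝔭 := im(ad ξ) equals the orthogonal complement 𝔱^⊥, and the Hessian H_ξ of p at ξ preserves the orthogonal decomposition 𝔤 = 𝔱 ⊕ 𝔭, i.e. H_ξ(𝔱) ⊆ 𝔱 and H_ξ(𝔭) ⊆ 𝔭. (This is the infinitesimal, coordinate-free form of the assertion that for an invariant polynomial p and ξ in the Cartan subalgebra, the second-derivative matrix p''(ξ) has block-diagonal form with respect to 𝔤 = 𝔱 ⊕ 𝔭.) -/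
open scoped RealInnerProductSpace

/-- Let `𝔤` be a finite-dimensional real Lie algebra (bracket `bk`) with an
ad-invariant inner product, and `p` a twice continuously differentiable infinitesimally
invariant function, with Hessian `H` at `ξ`. Suppose the centralizer `𝔱 = ker (ad ξ)` is
abelian. Then `im (ad ξ) = 𝔱ᗮ`, and the Hessian preserves the orthogonal decomposition
`𝔤 = 𝔱 ⊕ 𝔭`: it maps `𝔱` into `𝔱` and `𝔭 = im (ad ξ)` into itself. -/
theorem stmt4 {G : Type*} [NormedAddCommGroup G] [InnerProductSpace ℝ G]
    [FiniteDimensional ℝ G]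
    (bk : G →ₗ[ℝ] G →ₗ[ℝ] G)
    (hanti : ∀ x y : G, bk x y = -bk y x)
    (hjacobi : ∀ x y z : G, bk x (bk y z) = bk (bk x y) z + bk y (bk x z))
    (hadinv : ∀ x y z : G, ⟪bk x y, z⟫ + ⟪y, bk x z⟫ = 0)
    (p : G → ℝ) (hp : ContDiff ℝ 2 p)
    (hpinv : ∀ x y : G, ⟪gradient p x, bk y x⟫ = 0)
    (ξ : G) (H : G →ₗ[ℝ] G)
    (hH : ∀ v w : G, ⟪H v, w⟫ = iteratedFDeriv ℝ 2 p ξ ![v, w])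
    (habel : ∀ x ∈ LinearMap.ker (bk ξ), ∀ y ∈ LinearMap.ker (bk ξ), bk x y = 0) :
    LinearMap.range (bk ξ) = (LinearMap.ker (bk ξ))ᗮ ∧
      (∀ v ∈ LinearMap.ker (bk ξ), H v ∈ LinearMap.ker (bk ξ)) ∧
      (∀ v ∈ LinearMap.range (bk ξ), H v ∈ LinearMap.range (bk ξ)) := by
  classical
  have hgradpair : ∀ x w : G, ⟪gradient p x, w⟫ = fderiv ℝ p x w := by
    intro x w
    rw [gradient]
    exact InnerProductSpace.toDual_symm_apply
  -- skew-adjointness of A = bk ξ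
  have hskew : ∀ y z : G, ⟪bk ξ y, z⟫ = -⟪y, bk ξ z⟫ := by
    intro y z; have := hadinv ξ y z; linarith
  -- (range A)ᗮ = ker A
  have hker_orth : (LinearMap.range (bk ξ))ᗮ = LinearMap.ker (bk ξ) := by
    ext z
    simp only [Submodule.mem_orthogonal, LinearMap.mem_ker]
    constructor
    · intro h
      have h2 : ∀ y : G, ⟪y, bk ξ z⟫ = 0 := by
        intro y
        have h3 := h (bk ξ y) (LinearMap.mem_range_self _ y)
        have h4 := hskew y z
        linarith
      exact inner_self_eq_zero.mp (h2 (bk ξ z))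
    · intro h u hu
      obtain ⟨y, rfl⟩ := hu
      have h4 := hskew y z
      rw [h, inner_zero_right, neg_zero] at h4
      exact h4
  have hrange : LinearMap.range (bk ξ) = (LinearMap.ker (bk ξ))ᗮ := by
    rw [← hker_orth, Submodule.orthogonal_orthogonal]
  -- key derivative identity
  have hfd : ContDiff ℝ 1 (fderiv ℝ p) := hp.fderiv_right (m := 1) (by norm_num)
  have key : ∀ v y : G, ⟪H v, bk y ξ⟫ + ⟪gradient p ξ, bk y v⟫ = 0 := by
    intro v y
    have hzero : ∀ x : G, (fderiv ℝ p x) (bk y x) = 0 := by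
      intro x
      rw [← hgradpair]
      exact hpinv x y
    set B : (G →L[ℝ] ℝ) →L[ℝ] G →L[ℝ] ℝ := (ContinuousLinearMap.apply ℝ ℝ).flip with hB
    have hA : HasFDerivAt (fderiv ℝ p) (fderiv ℝ (fderiv ℝ p) ξ) ξ :=
      (hfd.differentiable one_ne_zero ξ).hasFDerivAt
    have hBd : HasFDerivAt (fun x : G => bk y x) (bk y).toContinuousLinearMap ξ :=
      (bk y).toContinuousLinearMap.hasFDerivAt
    have hder1 : HasFDerivAt (fun x : G => B (fderiv ℝ p x) (bk y x))
        (B.precompR G (fderiv ℝ p ξ) (bk y).toContinuousLinearMap +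
          B.precompL G (fderiv ℝ (fderiv ℝ p) ξ) (bk y ξ)) ξ :=
      B.hasFDerivAt_of_bilinear hA hBd
    have hder0 : HasFDerivAt (fun x : G => B (fderiv ℝ p x) (bk y x)) (0 : G →L[ℝ] ℝ) ξ := by
      have heq : (fun x : G => B (fderiv ℝ p x) (bk y x)) = fun _ => (0:ℝ) := by
        funext x
        simpa [hB] using hzero x
      rw [heq]
      exact hasFDerivAt_const 0 ξ
    have heq := hder1.unique hder0
    have happ := congrArg (fun L : G →L[ℝ] ℝ => L v) heq
    simp only [hB, ContinuousLinearMap.add_apply, ContinuousLinearMap.precompR_apply,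
      ContinuousLinearMap.precompL_apply, ContinuousLinearMap.flip_apply,
      ContinuousLinearMap.compL_apply, ContinuousLinearMap.comp_apply,
      ContinuousLinearMap.apply_apply, ContinuousLinearMap.zero_apply,
      LinearMap.coe_toContinuousLinearMap'] at happ
    have h1 : ⟪H v, bk y ξ⟫ = fderiv ℝ (fderiv ℝ p) ξ v (bk y ξ) := by
      rw [hH, iteratedFDeriv_two_apply]; rfl
    have h2 : ⟪gradient p ξ, bk y v⟫ = fderiv ℝ p ξ (bk y v) := hgradpair ξ (bk y v)
    rw [h1, h2]
    linarith [happ]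
  -- gradient is orthogonal to the range
  have hgrad_orth : gradient p ξ ∈ (LinearMap.range (bk ξ))ᗮ := by
    intro u hu
    obtain ⟨y, rfl⟩ := hu
    rw [real_inner_comm, hanti ξ y, inner_neg_right, hpinv ξ y]
    ring
  -- Hessian symmetric
  have hsymm : ∀ v w : G, ⟪H v, w⟫ = ⟪H w, v⟫ := by
    intro v w
    have hS := (hp.contDiffAt (x := ξ)).isSymmSndFDerivAt (by simp [minSmoothness_of_isRCLikeNormedField])
    rw [hH, hH, iteratedFDeriv_two_apply, iteratedFDeriv_two_apply]
    exact hS v w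
  -- H maps ker to ker
  have hHker : ∀ v ∈ LinearMap.ker (bk ξ), H v ∈ LinearMap.ker (bk ξ) := by
    intro v hv
    rw [← hker_orth]
    intro u hu
    obtain ⟨y, rfl⟩ := hu
    have h1 : ⟪H v, bk ξ y⟫ = -⟪H v, bk y ξ⟫ := by rw [hanti ξ y, inner_neg_right]
    have h2 := key v y
    have h3 : ⟪gradient p ξ, bk y v⟫ = 0 := by
      obtain ⟨t, ht, q, hq, rfl⟩ :=
        (LinearMap.ker (bk ξ)).exists_add_mem_mem_orthogonal y
      rw [← hrange] at hq
      obtain ⟨z, rfl⟩ := hq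
      have htv : bk t v = 0 := habel t ht v hv
      have hv' : bk ξ v = 0 := hv
      have hzv : bk (bk ξ z) v ∈ LinearMap.range (bk ξ) := by
        refine ⟨bk z v, ?_⟩
        have hj := hjacobi ξ z v
        rw [hv', map_zero, add_zero] at hj
        exact hj
      have hbsum : bk (t + bk ξ z) v = bk (bk ξ z) v := by
        rw [map_add, LinearMap.add_apply, htv, zero_add]
      rw [hbsum, real_inner_comm]
      exact hgrad_orth _ hzv
    rw [h3, add_zero] at h2
    rw [real_inner_comm, h1]
    linarith
  refine ⟨hrange, hHker, ?_⟩
  intro v hv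
  rw [hrange] at hv ⊢
  intro t ht
  rw [real_inner_comm, hsymm]
  exact hv (H t) (hHker t ht)
end

section
/- Suppose ξ ∈ 𝔤 is such that 𝔱 = ker(ad ξ) is abelian, and set 𝔭 = im(ad ξ) = 𝔱^⊥. Then the three linear maps H_ξ, ad_ξ and ad_{∇p(ξ)} all map 𝔭 into itself, and their restrictions to 𝔭 satisfy det(H_ξ|_𝔭) · det(ad_ξ|_𝔭) = det(ad_{∇p(ξ)}|_𝔭). (This is the coordinate-free form of the determinant formula det(p''(ξ)|_𝔭)^{1/2} = ∏_{α∈R_+} (α·p'(ξ))/(α·ξ) for a regular element ξ of the Cartan subalgebra of a compact Lie algebra, since for ζ in the Cartan subalgebra det(ad_ζ|_𝔭) is the square of the product of the positive-root pairings with ζ up to a common normalization.) -/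
open scoped RealInnerProductSpace

/-- Let `𝔤` be a finite-dimensional real Lie algebra (bracket `bk`) with an
ad-invariant inner product, and `p` a twice continuously differentiable infinitesimally
invariant function, with Hessian `H` at `ξ`. Suppose `𝔱 = ker (ad ξ)` is abelian, and set
`𝔭 = im (ad ξ)`. Then `H`, `ad_ξ` and `ad_{∇p(ξ)}` all map `𝔭` into itself, and their
restrictions to `𝔭` satisfy `det (H|𝔭) · det (ad_ξ|𝔭) = det (ad_{∇p(ξ)}|𝔭)`. -/
theorem stmt5 {G : Type*} [NormedAddCommGroup G] [InnerProductSpace ℝ G]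
    [FiniteDimensional ℝ G]
    (bk : G →ₗ[ℝ] G →ₗ[ℝ] G)
    (hanti : ∀ x y : G, bk x y = -bk y x)
    (hjacobi : ∀ x y z : G, bk x (bk y z) = bk (bk x y) z + bk y (bk x z))
    (hadinv : ∀ x y z : G, ⟪bk x y, z⟫ + ⟪y, bk x z⟫ = 0)
    (p : G → ℝ) (hp : ContDiff ℝ 2 p)
    (hpinv : ∀ x y : G, ⟪gradient p x, bk y x⟫ = 0)
    (ξ : G) (H : G →ₗ[ℝ] G)
    (hH : ∀ v w : G, ⟪H v, w⟫ = iteratedFDeriv ℝ 2 p ξ ![v, w])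
    (habel : ∀ x ∈ LinearMap.ker (bk ξ), ∀ y ∈ LinearMap.ker (bk ξ), bk x y = 0) :
    ∃ (h₁ : ∀ v ∈ LinearMap.range (bk ξ), H v ∈ LinearMap.range (bk ξ))
      (h₂ : ∀ v ∈ LinearMap.range (bk ξ), bk ξ v ∈ LinearMap.range (bk ξ))
      (h₃ : ∀ v ∈ LinearMap.range (bk ξ),
          bk (gradient p ξ) v ∈ LinearMap.range (bk ξ)),
      LinearMap.det (H.restrict h₁) * LinearMap.det ((bk ξ).restrict h₂) =
        LinearMap.det ((bk (gradient p ξ)).restrict h₃) := by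
  classical
  -- skew-adjointness of ad
  have skw : ∀ x a b : G, ⟪bk x a, b⟫ = -⟪a, bk x b⟫ := by
    intro x a b; linarith [hadinv x a b]
  -- analysis: second derivative facts
  set f' : G → (G →L[ℝ] ℝ) := fderiv ℝ p with hf'
  have hdiffp : Differentiable ℝ p := hp.differentiable two_ne_zero
  have hcd1 : ContDiff ℝ 1 f' := hp.fderiv_right (by norm_num)
  have hdiff2 : DifferentiableAt ℝ f' ξ := (hcd1.differentiable one_ne_zero) ξ
  set f'' : G →L[ℝ] (G →L[ℝ] ℝ) := fderiv ℝ f' ξ with hf''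
  have hF'' : HasFDerivAt f' f'' ξ := hdiff2.hasFDerivAt
  -- H is given by f''
  have hHf : ∀ v w : G, ⟪H v, w⟫ = f'' v w := by
    intro v w
    rw [hH, iteratedFDeriv_two_apply]
    simp [hf'', hf']
  -- symmetry of H
  have hsymm : ∀ v w : G, ⟪H v, w⟫ = ⟪H w, v⟫ := by
    intro v w
    rw [hHf, hHf]
    exact second_derivative_symmetric (fun y => (hdiffp y).hasFDerivAt) hF'' v w
  -- gradient has derivative (as function) v ↦ H v
  set L : (G →L[ℝ] ℝ) →L[ℝ] G :=
    ((InnerProductSpace.toDual ℝ G).symm.toContinuousLinearEquiv :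
      (G →L[ℝ] ℝ) ≃L[ℝ] G).toContinuousLinearMap with hL
  have hLval : ∀ (φ : G →L[ℝ] ℝ) (w : G), ⟪L φ, w⟫ = φ w := by
    intro φ w
    simp [hL, InnerProductSpace.toDual_symm_apply]
  have hgradeq : gradient p = fun x => L (f' x) := rfl
  have hFd : HasFDerivAt (gradient p) (L.comp f'') ξ := by
    rw [hgradeq]
    exact L.hasFDerivAt.comp ξ hF''
  have hLH : ∀ v : G, (L.comp f'') v = H v := by
    intro v
    apply ext_inner_right ℝ
    intro w
    rw [ContinuousLinearMap.comp_apply, hLval, ← hHf]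
  -- the key differentiated identity
  have hkey0 : ∀ y v : G, ⟪gradient p ξ, bk y v⟫ + ⟪H v, bk y ξ⟫ = 0 := by
    intro y v
    have hb : HasFDerivAt (fun x => bk y x) (bk y).toContinuousLinearMap ξ :=
      (bk y).toContinuousLinearMap.hasFDerivAt
    have hin := hFd.inner ℝ hb
    have hzero : (fun x => ⟪gradient p x, bk y x⟫) = fun _ => (0 : ℝ) :=
      funext fun x => hpinv x y
    rw [hzero] at hin
    have huniq := hin.unique (hasFDerivAt_const (0 : ℝ) ξ)
    have := congrFun (congrArg (fun (T : G →L[ℝ] ℝ) => (T : G → ℝ)) huniq) v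
    simp only [ContinuousLinearMap.comp_apply, ContinuousLinearMap.prod_apply,
      fderivInnerCLM_apply, ContinuousLinearMap.zero_apply,
      LinearMap.coe_toContinuousLinearMap'] at this
    rw [show L (f'' v) = H v from hLH v] at this
    linarith [this]
  -- gradient at ξ is in the kernel
  have hgk : bk ξ (gradient p ξ) = 0 := by
    apply ext_inner_right ℝ
    intro w
    have h := hpinv ξ w
    rw [hanti w ξ, inner_neg_right] at h
    rw [skw, inner_zero_left]
    linarith
  -- key operator identity: bk ξ ∘ H = bk (gradient p ξ)
  have hkey : ∀ v : G, bk ξ (H v) = bk (gradient p ξ) v := by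
    intro v
    apply ext_inner_right ℝ
    intro y
    rw [skw]
    have h1 : ⟪H v, bk ξ y⟫ = -⟪H v, bk y ξ⟫ := by rw [hanti ξ y]; simp
    have h2 := hkey0 y v
    have h3 := skw y (gradient p ξ) v
    have h4 : ⟪bk y (gradient p ξ), v⟫ = -⟪bk (gradient p ξ) y, v⟫ := by
      rw [hanti y (gradient p ξ)]; simp
    have h5 : ⟪bk (gradient p ξ) y, v⟫ = -⟪y, bk (gradient p ξ) v⟫ :=
      skw (gradient p ξ) y v
    have h6 : ⟪bk (gradient p ξ) v, y⟫ = ⟪y, bk (gradient p ξ) v⟫ :=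
      real_inner_comm _ _
    linarith
  -- orthogonality: range (bk ξ) = (ker (bk ξ))ᗮ
  have hro : (LinearMap.range (bk ξ)).orthogonal
      = (LinearMap.ker (bk ξ)) := by
    ext w
    constructor
    · intro hw
      rw [LinearMap.mem_ker]
      apply ext_inner_right ℝ
      intro z
      rw [skw]
      have h0 := (Submodule.mem_orthogonal _ w).1 hw (bk ξ z) ⟨z, rfl⟩
      have h1 : ⟪w, bk ξ z⟫ = (0:ℝ) := by rw [real_inner_comm]; exact h0
      simp [h1]
    · intro hw
      rw [Submodule.mem_orthogonal]
      rintro u ⟨z, rfl⟩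
      rw [skw]
      rw [LinearMap.mem_ker] at hw
      simp [hw]
  have hor : (LinearMap.ker (bk ξ)).orthogonal = LinearMap.range (bk ξ) := by
    rw [← hro, Submodule.orthogonal_orthogonal]
  -- H preserves the kernel
  have hHk : ∀ t ∈ LinearMap.ker (bk ξ), H t ∈ LinearMap.ker (bk ξ) := by
    intro t ht
    rw [LinearMap.mem_ker, hkey]
    have hg : gradient p ξ ∈ LinearMap.ker (bk ξ) := by
      rw [LinearMap.mem_ker]; exact hgk
    exact habel _ hg _ ht
  -- membership proofs
  have h₁ : ∀ v ∈ LinearMap.range (bk ξ), H v ∈ LinearMap.range (bk ξ) := by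
    intro v hv
    rw [← hor, Submodule.mem_orthogonal]
    intro t ht
    rw [real_inner_comm, hsymm]
    have hvt : ⟪v, H t⟫ = 0 := by
      rw [← hor] at hv
      exact real_inner_comm (H t) v ▸ (Submodule.mem_orthogonal _ v).1 hv (H t) (hHk t ht)
    rw [real_inner_comm] at hvt
    exact hvt
  have h₂ : ∀ v ∈ LinearMap.range (bk ξ), bk ξ v ∈ LinearMap.range (bk ξ) :=
    fun v _ => ⟨v, rfl⟩
  have h₃ : ∀ v ∈ LinearMap.range (bk ξ),
      bk (gradient p ξ) v ∈ LinearMap.range (bk ξ) := by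
    intro v _
    exact ⟨H v, hkey v⟩
  refine ⟨h₁, h₂, h₃, ?_⟩
  have hcomp : ((bk ξ).restrict h₂) ∘ₗ (H.restrict h₁)
      = (bk (gradient p ξ)).restrict h₃ := by
    ext v
    simp [LinearMap.restrict_apply, hkey]
  rw [mul_comm, ← LinearMap.det_comp, hcomp]
end
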